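/- arXiv:1006.3023 — 4 statements merged into one kernel-verified Lean document; each statement's English description precedes it below -/
import Mathlib

section
/- A space X has the Hurewicz property if and only if every continuous image of X in the Baire space ω^ω is bounded with respect to eventual domination. -/
open Filter

/-- The Hurewicz covering property. -/
def HurewiczProperty (X : Type*) [TopologicalSpace X] : Prop :=
  ∀ U : ℕ → Set (Set X),
    (∀ n, (∀ u ∈ U n, IsOpen u) ∧ ⋃₀ U n = Set.univ) →
    ∃ F : ℕ → Set (Set X),
      (∀ n, F n ⊆ U n ∧ (F n).Finite) ∧
      ∀ x : X, ∀ᶠ n in atTop, x ∈ ⋃₀ F n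

/-- Hurewicz's classical theorem: a separable metrizable zero-dimensional space has the
Hurewicz property iff every continuous image of it in the Baire space is bounded
with respect to eventual domination. -/
theorem hurewicz_iff_continuous_images_bounded
    (X : Type*) [TopologicalSpace X] [TopologicalSpace.MetrizableSpace X]
    [SecondCountableTopology X]
    (hzd : TopologicalSpace.IsTopologicalBasis {s : Set X | IsClopen s}) :
    HurewiczProperty X ↔
      ∀ f : X → (ℕ → ℕ), Continuous f →
        ∃ g : ℕ → ℕ, ∀ x : X, ∀ᶠ n in atTop, f x n ≤ g n := by
  constructor
  · -- Hurewicz → all continuous images bounded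
    intro hH f hf
    set φ : ℕ → ℕ → Set X := fun n k => {x | f x n ≤ k} with hφ
    have hopen : ∀ n k, IsOpen (φ n k) := by
      intro n k
      have hc : Continuous fun x => f x n := (continuous_apply n).comp hf
      exact (isOpen_discrete (Set.Iic k)).preimage hc
    obtain ⟨F, hF1, hF2⟩ := hH (fun n => Set.range (φ n)) (by
      intro n
      constructor
      · rintro u ⟨k, rfl⟩; exact hopen n k
      · ext x
        simp only [Set.mem_sUnion, Set.mem_univ, iff_true]
        exact ⟨φ n (f x n), ⟨f x n, rfl⟩, by simp [hφ]⟩)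
    -- bound
    have hch : ∀ n, ∀ u ∈ F n, ∃ k, φ n k = u := fun n u hu => (hF1 n).1 hu
    classical
    refine ⟨fun n => sSup ((fun u => if h : ∃ k, φ n k = u then Classical.choose h else 0) '' F n),
      fun x => ?_⟩
    filter_upwards [hF2 x] with n hn
    obtain ⟨u, huF, hxu⟩ := hn
    have hex : ∃ k, φ n k = u := hch n u huF
    have hle : f x n ≤ Classical.choose hex := by
      have := Classical.choose_spec hex
      rw [← this] at hxu
      exact hxu
    have hmem : (if h : ∃ k, φ n k = u then Classical.choose h else 0) ∈
        (fun u => if h : ∃ k, φ n k = u then Classical.choose h else 0) '' F n :=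
      Set.mem_image_of_mem _ huF
    have hbdd : BddAbove ((fun u => if h : ∃ k, φ n k = u then Classical.choose h else 0) '' F n) :=
      (((hF1 n).2).image _).bddAbove
    have : (if h : ∃ k, φ n k = u then Classical.choose h else 0) = Classical.choose hex := by
      simp [hex]
    calc f x n ≤ Classical.choose hex := hle
      _ ≤ _ := by rw [← this]; exact le_csSup hbdd hmem
  · -- bounded images → Hurewicz
    intro hB U hU
    classical
    by_cases hX : Nonempty X
    · -- countable clopen refinements
      have href : ∀ n, ∃ W : ℕ → Set X, (∀ k, IsClopen (W k)) ∧
          (∀ k, ∃ v ∈ U n, W k ⊆ v) ∧ (⋃ k, W k) = Set.univ := by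
        intro n
        set S : Set (Set X) := {s | IsClopen s ∧ ∃ v ∈ U n, s ⊆ v} with hS
        have hSopen : ∀ s ∈ S, IsOpen s := fun s hs => hs.1.isOpen
        have hScov : ⋃₀ S = Set.univ := by
          apply Set.eq_univ_of_forall
          intro x
          have hx : x ∈ ⋃₀ U n := (hU n).2 ▸ Set.mem_univ x
          obtain ⟨v, hv, hxv⟩ := hx
          obtain ⟨s, hsB, hxs, hsv⟩ :=
            hzd.exists_subset_of_mem_open hxv ((hU n).1 v hv)
          exact ⟨s, ⟨hsB, v, hv, hsv⟩, hxs⟩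
        obtain ⟨T, hTc, hTS, hTcov⟩ := TopologicalSpace.isOpen_sUnion_countable S hSopen
        rw [hScov] at hTcov
        have hTne : T.Nonempty := by
          rcases Set.eq_empty_or_nonempty T with h | h
          · exfalso
            obtain ⟨x⟩ := hX
            have : x ∈ ⋃₀ T := hTcov ▸ Set.mem_univ x
            simp [h] at this
          · exact h
        obtain ⟨e, he⟩ := hTc.exists_eq_range hTne
        refine ⟨e, ?_, ?_, ?_⟩
        · intro k
          have : e k ∈ T := he ▸ Set.mem_range_self k
          exact (hTS this).1
        · intro k
          have : e k ∈ T := he ▸ Set.mem_range_self k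
          exact (hTS this).2
        · apply Set.eq_univ_of_forall
          intro x
          have : x ∈ ⋃₀ T := hTcov ▸ Set.mem_univ x
          obtain ⟨s, hsT, hxs⟩ := this
          rw [he] at hsT
          obtain ⟨k, rfl⟩ := hsT
          exact Set.mem_iUnion.2 ⟨k, hxs⟩
      choose W hWclopen hWsub hWcov using href
      choose u hu husub using hWsub
      have hcov : ∀ x n, ∃ k, x ∈ W n k := by
        intro x n
        have : x ∈ ⋃ k, W n k := (hWcov n) ▸ Set.mem_univ x
        exact Set.mem_iUnion.1 this
      set f : X → ℕ → ℕ := fun x n => Nat.find (hcov x n) with hfdef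
      have hfc : Continuous f := by
        apply continuous_pi
        intro n
        rw [continuous_discrete_rng]
        intro k
        have heq : (fun x => f x n) ⁻¹' {k} =
            W n k ∩ ⋂ j ∈ Finset.range k, (W n j)ᶜ := by
          ext x
          simp only [Set.mem_preimage, Set.mem_singleton_iff, hfdef, Nat.find_eq_iff,
            Set.mem_inter_iff, Set.mem_iInter, Finset.mem_range, Set.mem_compl_iff]
        rw [heq]
        exact ((hWclopen n k).isOpen).inter
          (isOpen_biInter_finset fun j _ => (hWclopen n j).compl.isOpen)
      obtain ⟨g, hg⟩ := hB f hfc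
      refine ⟨fun n => (u n) '' (Set.Iic (g n)), fun n => ⟨?_, (Set.finite_Iic _).image _⟩, ?_⟩
      · rintro _ ⟨k, _, rfl⟩; exact hu n k
      · intro x
        filter_upwards [hg x] with n hn
        exact ⟨u n (f x n), ⟨f x n, hn, rfl⟩, husub n (f x n) (Nat.find_spec (hcov x n))⟩
    · exact ⟨fun _ => ∅, fun n => ⟨Set.empty_subset _, Set.finite_empty⟩,
        fun x => (hX ⟨x⟩).elim⟩
end

section
/- Every Q-point ultrafilter on ω has nonempty intersection with the van der Waerden ideal; that is, every Q-point contains a set that is AP-small (contains no arbitrarily long arithmetic progressions). -/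
/-- An ultrafilter on ℕ is a Q-point if for every partition of ℕ into finite pieces
there is a member of the ultrafilter meeting each piece in at most one point.
(The partition is coded by a function `p` with finite fibers.) -/
def IsQPoint (U : Ultrafilter ℕ) : Prop :=
  ∀ p : ℕ → ℕ, (∀ k, (p ⁻¹' {k}).Finite) →
    ∃ A ∈ U, ∀ k, (A ∩ p ⁻¹' {k}).Subsingleton

/-- The van der Waerden ideal: sets containing no arbitrarily long arithmetic
progressions. -/
def VdWIdeal : Set (Set ℕ) :=
  {A | ¬ ∀ k : ℕ, ∃ a d : ℕ, 0 < d ∧ ∀ i < k, a + i * d ∈ A}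

/-- Every Q-point has nonempty intersection with the van der Waerden ideal. -/
theorem qPoint_meets_vdWIdeal (U : Ultrafilter ℕ) (hU : IsQPoint U) :
    ∃ A ∈ U, A ∈ VdWIdeal := by
  obtain ⟨A, hAU, hsel⟩ := hU (fun n => Nat.log 2 n) (by
    intro k
    apply Set.Finite.subset (Set.finite_Iio (2 ^ (k + 1)))
    intro n hn
    simp only [Set.mem_preimage, Set.mem_singleton_iff] at hn
    simp only [Set.mem_Iio]
    by_contra h
    push_neg at h
    have h2 : k + 1 ≤ Nat.log 2 n := by
      have := Nat.log_mono_right (b := 2) h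
      rwa [Nat.log_pow (by norm_num)] at this
    omega)
  refine ⟨A, hAU, ?_⟩
  intro hbad
  obtain ⟨a, d, hd, hAP⟩ := hbad 5
  set L : ℕ → ℕ := fun i => Nat.log 2 (a + i * d) with hL
  have collide : ∀ i j : ℕ, i < 5 → j < 5 → L i = L j → i = j := by
    intro i j hi hj hLij
    have h1 : a + i * d ∈ A ∩ (fun n => Nat.log 2 n) ⁻¹' {L j} :=
      ⟨hAP i hi, hLij⟩
    have h2 : a + j * d ∈ A ∩ (fun n => Nat.log 2 n) ⁻¹' {L j} :=
      ⟨hAP j hj, rfl⟩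
    have heq := hsel (L j) h1 h2
    have : i * d = j * d := by omega
    exact Nat.eq_of_mul_eq_mul_right hd this
  have hmono : ∀ i j : ℕ, i ≤ j → L i ≤ L j := by
    intro i j hij
    exact Nat.log_mono_right (by nlinarith)
  have h23 : L 2 < L 3 := by
    rcases lt_or_eq_of_le (hmono 2 3 (by norm_num)) with h | h
    · exact h
    · exact absurd (collide 2 3 (by norm_num) (by norm_num) h) (by norm_num)
  have h34 : L 3 < L 4 := by
    rcases lt_or_eq_of_le (hmono 3 4 (by norm_num)) with h | h
    · exact h
    · exact absurd (collide 3 4 (by norm_num) (by norm_num) h) (by norm_num)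
  have hub : a + 2 * d < 2 ^ (L 2 + 1) := Nat.lt_pow_succ_log_self (by norm_num) _
  have hlb : 2 ^ (L 4) ≤ a + 4 * d := Nat.pow_log_le_self 2 (by omega)
  have hpow : 2 ^ (L 2 + 2) ≤ 2 ^ (L 4) := Nat.pow_le_pow_right (by norm_num) (by omega)
  have hsucc : (2 : ℕ) ^ (L 2 + 2) = 2 * 2 ^ (L 2 + 1) := by ring
  omega
end

section
/- Assuming Martin's axiom for countable posets (equivalently, cov(meager) = 𝔠), there exists a rapid ultrafilter U on ω such that every member of U contains arithmetic progressions of arbitrary finite length (i.e., U ∩ W = ∅ where W is the van der Waerden ideal). -/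
open Filter

/-- An ultrafilter on ℕ is rapid if for every `f : ℕ → ℕ` there is a member whose
increasing enumeration dominates `f` everywhere. -/
def IsRapid (U : Ultrafilter ℕ) : Prop :=
  ∀ f : ℕ → ℕ, ∃ A ∈ U, A.Infinite ∧ ∀ n, f n ≤ Nat.nth (· ∈ A) n

open Set

section Aux

/-- `A` contains arbitrarily long arithmetic progressions. -/
def APRich (A : Set ℕ) : Prop :=
  ∀ k : ℕ, ∃ a d : ℕ, 0 < d ∧ ∀ i < k, a + i * d ∈ A

lemma APRich.mono {A B : Set ℕ} (h : APRich A) (hAB : A ⊆ B) : APRich B := by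
  intro k
  obtain ⟨a, d, hd, hm⟩ := h k
  exact ⟨a, d, hd, fun i hi => hAB (hm i hi)⟩

lemma apRich_univ : APRich Set.univ := fun _ => ⟨0, 1, one_pos, fun _ _ => trivial⟩

/-- Finitary van der Waerden for two colors, from Hales–Jewett. -/
lemma vdw_finitary (k : ℕ) : ∃ N : ℕ, ∀ C : ℕ → Bool, ∃ a d : ℕ, 0 < d ∧
    (∀ i < k, a + i * d < N) ∧ ∀ i < k, C (a + i * d) = C a := by
  obtain ⟨ι, _inst, hι⟩ := Combinatorics.Line.exists_mono_in_high_dimension (Fin (k+1)) Bool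
  classical
  refine ⟨k * Fintype.card ι + 1, fun C => ?_⟩
  obtain ⟨l, c, hl⟩ := hι fun v => C (∑ i, (v i : ℕ))
  set s : Finset ι := Finset.univ.filter (fun i => l.idxFun i = none) with hs
  set b : ℕ := ∑ i ∈ sᶜ, ((l.idxFun i).map Fin.val).getD 0 with hb
  have hd : 0 < s.card := by
    refine Finset.card_pos.mpr ⟨l.proper.choose, ?_⟩
    rw [hs, Finset.mem_filter]
    exact ⟨Finset.mem_univ _, l.proper.choose_spec⟩
  have hcomp : ∀ i ∈ sᶜ, ∃ y, l.idxFun i = some y := by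
    intro i hi
    rw [Finset.mem_compl, hs, Finset.mem_filter] at hi
    exact Option.ne_none_iff_exists'.mp (fun h => hi ⟨Finset.mem_univ _, h⟩)
  have key : ∀ x : Fin (k+1), ∑ i, ((l.idxFun i).getD x : ℕ) = b + x.val * s.card := by
    intro x
    rw [← Finset.sum_add_sum_compl s, add_comm]
    congr 1
    · rw [hb]
      refine Finset.sum_congr rfl fun i hi => ?_
      obtain ⟨y, hy⟩ := hcomp i hi
      simp [hy]
    · have : ∀ i ∈ s, ((l.idxFun i).getD x : ℕ) = (x : ℕ) := by
        intro i hi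
        rw [hs, Finset.mem_filter] at hi
        simp [hi.2]
      rw [Finset.sum_congr rfl this, Finset.sum_const, smul_eq_mul, mul_comm]
  have hCx : ∀ x : Fin (k+1), C (b + x.val * s.card) = c := by
    intro x
    have := hl x
    simpa [Combinatorics.Line.coe_apply, key x] using this
  have hbound : ∀ i ≤ k, b + i * s.card ≤ k * Fintype.card ι := by
    intro i hi
    have h1 : b ≤ k * sᶜ.card := by
      rw [hb]
      calc ∑ j ∈ sᶜ, ((l.idxFun j).map Fin.val).getD 0
          ≤ ∑ _j ∈ sᶜ, k := by
            refine Finset.sum_le_sum fun j hj => ?_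
            obtain ⟨y, hy⟩ := hcomp j hj
            simp [hy]
            omega
        _ = sᶜ.card * k := by rw [Finset.sum_const, smul_eq_mul]
        _ = k * sᶜ.card := mul_comm _ _
    have h2 : i * s.card ≤ k * s.card := Nat.mul_le_mul_right _ hi
    have h3 : sᶜ.card + s.card = Fintype.card ι := by
      rw [Finset.card_compl]
      have := Finset.card_le_univ s
      omega
    calc b + i * s.card ≤ k * sᶜ.card + k * s.card := add_le_add h1 h2
      _ = k * Fintype.card ι := by rw [← Nat.mul_add, h3]
  refine ⟨b, s.card, hd, ?_, ?_⟩
  · intro i hi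
    have := hbound i (by omega)
    omega
  · intro i hi
    have h1 := hCx ⟨i, by omega⟩
    have h2 := hCx ⟨0, by omega⟩
    simp only [Fin.val_mk] at h1 h2
    simp only [zero_mul, add_zero] at h2
    rw [h1, h2]

/-- The van der Waerden ideal property: if a union is AP-rich, one part is. -/
lemma APRich.union {A B : Set ℕ} (h : APRich (A ∪ B)) : APRich A ∨ APRich B := by
  by_contra hc
  push_neg at hc
  obtain ⟨hA, hB⟩ := hc
  rw [APRich] at hA hB
  push_neg at hA hB
  obtain ⟨kA, hkA⟩ := hA
  obtain ⟨kB, hkB⟩ := hB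
  classical
  set k := max kA kB with hk
  obtain ⟨N, hN⟩ := vdw_finitary k
  obtain ⟨a0, d0, hd0, hm⟩ := h N
  obtain ⟨a, d, hd, hlt, hmono⟩ := hN fun i => decide (a0 + i * d0 ∈ A)
  have key : ∀ i < k, a0 + (a + i * d) * d0 = (a0 + a * d0) + i * (d * d0) := by
    intro i _; ring
  cases hCa : decide (a0 + a * d0 ∈ A) with
  | true =>
    obtain ⟨i, hik, hi⟩ := hkA (a0 + a * d0) (d * d0) (Nat.mul_pos hd hd0)
    apply hi
    rw [← key i (lt_of_lt_of_le hik (le_max_left _ _))]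
    have := hmono i (lt_of_lt_of_le hik (le_max_left _ _))
    rw [hCa] at this
    exact of_decide_eq_true this
  | false =>
    obtain ⟨i, hik, hi⟩ := hkB (a0 + a * d0) (d * d0) (Nat.mul_pos hd hd0)
    apply hi
    have hik' : i < k := lt_of_lt_of_le hik (le_max_right _ _)
    have hmem : a0 + (a + i * d) * d0 ∈ A ∪ B := hm _ (hlt i hik')
    have hnotA : a0 + (a + i * d) * d0 ∉ A := by
      have := hmono i hik'
      rw [hCa] at this
      exact of_decide_eq_false this
    rw [← key i hik']
    rcases hmem with h' | h'
    · exact absurd h' hnotA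
    · exact h'

lemma not_apRich_bounded (m : ℕ) : ¬ APRich {x : ℕ | x < m} := by
  intro h
  obtain ⟨a, d, hd, hm⟩ := h (m + 1)
  have := hm m (by omega)
  simp only [Set.mem_setOf_eq] at this
  nlinarith

/-- Removing a bounded set preserves AP-richness. -/
lemma APRich.diff_bounded {A : Set ℕ} (h : APRich A) (m : ℕ) :
    APRich (A \ {x | x < m}) := by
  have h1 : APRich ((A \ {x | x < m}) ∪ {x | x < m}) :=
    h.mono fun x hx => by by_cases hxm : x < m
                          · exact Or.inr hxm
                          · exact Or.inl ⟨hx, hxm⟩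
  rcases h1.union with h2 | h2
  · exact h2
  · exact absurd h2 (not_apRich_bounded m)

open Classical in
/-- The chain determined by a "generic" `x : ℕ → ℕ`. -/
noncomputable def genChain {P : Type*} (R : P → P → Prop) (p : ℕ → P) (x : ℕ → ℕ) : ℕ → P
  | 0 => p (x 0)
  | n+1 => if R (p (x (n+1))) (genChain R p x n) then p (x (n+1)) else genChain R p x n

lemma genChain_step {P : Type*} (R : P → P → Prop) (hrefl : ∀ a, R a a) (p : ℕ → P)
    (x : ℕ → ℕ) (n : ℕ) : R (genChain R p x (n+1)) (genChain R p x n) := by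
  rw [genChain]
  split
  · assumption
  · exact hrefl _

lemma genChain_local {P : Type*} (R : P → P → Prop) (p : ℕ → P) {x y : ℕ → ℕ} :
    ∀ {n : ℕ}, (∀ i ≤ n, x i = y i) → genChain R p x n = genChain R p y n := by
  intro n
  induction n with
  | zero => intro h; simp [genChain, h 0 le_rfl]
  | succ n ih =>
    intro h
    have h1 : genChain R p x n = genChain R p y n := ih fun i hi => h i (hi.trans (Nat.le_succ n))
    rw [genChain, genChain, h1, h (n+1) le_rfl]

/-- Martin's axiom for countable posets, derived from `cov(meager) = 𝔠`. -/
lemma ma_countable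
    (hMA : ∀ 𝒜 : Set (Set (ℕ → ℕ)), (∀ A ∈ 𝒜, IsMeagre A) → ⋃₀ 𝒜 = Set.univ →
      Cardinal.continuum ≤ Cardinal.mk 𝒜)
    {P : Type} [Countable P] [Nonempty P] (R : P → P → Prop) (hrefl : ∀ a, R a a)
    (𝒟 : Set (Set P)) (hcard : Cardinal.mk 𝒟 < Cardinal.continuum)
    (hdense : ∀ D ∈ 𝒟, ∀ a : P, ∃ b ∈ D, R b a) :
    ∃ q : ℕ → P, (∀ n, R (q (n+1)) (q n)) ∧ ∀ D ∈ 𝒟, ∃ n, q n ∈ D := by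
  obtain ⟨p, hp⟩ := exists_surjective_nat P
  set Bad : Set P → Set (ℕ → ℕ) := fun D => {x | ∀ n, genChain R p x n ∉ D} with hBad
  -- each Bad D (for D dense) is nowhere dense hence meagre
  have hclosed : ∀ D : Set P, IsClosed (Bad D) := by
    intro D
    have : Bad D = ⋂ n, {x : ℕ → ℕ | genChain R p x n ∈ D}ᶜ := by
      ext x; simp [hBad]
    rw [this]
    refine isClosed_iInter fun n => ?_
    rw [isClosed_compl_iff]
    -- {x | genChain x n ∈ D} is open: it only depends on coordinates ≤ n
    rw [isOpen_pi_iff]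
    intro f hf
    refine ⟨Finset.range (n+1), fun i => {f i}, fun a _ => ⟨isOpen_discrete _, rfl⟩, ?_⟩
    intro y hy
    have hagree : ∀ i ≤ n, f i = y i := by
      intro i hi
      have := hy i (by simp; omega)
      simpa using this.symm
    show genChain R p y n ∈ D
    rw [← genChain_local R p hagree]
    exact hf
  have hmeagre : ∀ D ∈ 𝒟, IsMeagre (Bad D) := by
    intro D hD
    rw [isMeagre_iff_countable_union_isNowhereDense]
    refine ⟨{Bad D}, ?_, countable_singleton _, by simp⟩
    intro t ht
    rw [mem_singleton_iff] at ht
    subst ht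
    rw [(hclosed D).isNowhereDense_iff, eq_empty_iff_forall_notMem]
    intro x hx
    obtain ⟨U, hUsub, hUopen, hxU⟩ := mem_interior.mp hx
    obtain ⟨I, u, hu, hpi⟩ := isOpen_pi_iff.mp hUopen x hxU
    set n0 : ℕ := (I.sup id) + 1 with hn0
    obtain ⟨b, hbD, hbR⟩ := hdense D hD (genChain R p x (n0 - 1))
    obtain ⟨m, rfl⟩ := hp b
    set y : ℕ → ℕ := Function.update x n0 m with hy
    have hyI : ∀ a ∈ I, y a ∈ u a := by
      intro a ha
      have hne : a ≠ n0 := by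
        have : a ≤ I.sup id := Finset.le_sup (f := id) ha
        omega
      rw [hy, Function.update_of_ne hne]
      exact (hu a ha).2
    have hyU : y ∈ U := hpi fun a ha => hyI a ha
    have hylocal : genChain R p y (n0 - 1) = genChain R p x (n0 - 1) := by
      refine genChain_local R p fun i hi => ?_
      rw [hy, Function.update_of_ne (by omega)]
    have hyD : genChain R p y n0 ∈ D := by
      have hn0' : n0 = (n0 - 1) + 1 := by omega
      rw [hn0']
      rw [genChain]
      have hRy : R (p (y ((n0-1)+1))) (genChain R p y (n0 - 1)) := by
        rw [hylocal, ← hn0', hy, Function.update_self]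
        exact hbR
      rw [if_pos hRy, ← hn0', hy, Function.update_self]
      exact hbD
    have : y ∈ Bad D := hUsub hyU
    exact this n0 hyD
  -- use hMA to find a generic x
  by_cases hcover : ∀ x : ℕ → ℕ, ∃ D ∈ 𝒟, x ∈ Bad D
  · exfalso
    have hunion : ⋃₀ (Bad '' 𝒟) = Set.univ := by
      ext x
      simp only [mem_sUnion, mem_univ, iff_true]
      obtain ⟨D, hD, hx⟩ := hcover x
      exact ⟨Bad D, mem_image_of_mem _ hD, hx⟩
    have h1 := hMA (Bad '' 𝒟) (by rintro A ⟨D, hD, rfl⟩; exact hmeagre D hD) hunion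
    have h2 : Cardinal.mk (Bad '' 𝒟) ≤ Cardinal.mk 𝒟 := Cardinal.mk_image_le
    exact absurd (h1.trans h2) (not_le.mpr hcard)
  · push_neg at hcover
    obtain ⟨x, hx⟩ := hcover
    refine ⟨genChain R p x, fun n => genChain_step R hrefl p x n, ?_⟩
    intro D hD
    have := hx D hD
    rw [hBad, mem_setOf_eq] at this
    push_neg at this
    exact this

lemma mk_finset_prod_nat_lt_continuum {ι : Type} (hι : Cardinal.mk ι < Cardinal.continuum) :
    Cardinal.mk (Finset ι × ℕ) < Cardinal.continuum := by
  rcases finite_or_infinite ι with hf | hinf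
  · have : Countable (Finset ι × ℕ) := by infer_instance
    exact lt_of_le_of_lt Cardinal.mk_le_aleph0 Cardinal.aleph0_lt_continuum
  · rw [Cardinal.mk_prod, Cardinal.lift_id, Cardinal.lift_id,
      Cardinal.mk_finset_of_infinite, Cardinal.mk_nat,
      Cardinal.mul_eq_max (Cardinal.infinite_iff.mp hinf) le_rfl]
    exact max_lt hι Cardinal.aleph0_lt_continuum

/-- One step of the construction: given fewer than continuum many sets whose finite
intersections are all AP-rich, and a function `f`, find a sparse (`f`-dominating) set
preserving this property. -/
lemma step_rapid
    (hMA : ∀ 𝒜 : Set (Set (ℕ → ℕ)), (∀ A ∈ 𝒜, IsMeagre A) → ⋃₀ 𝒜 = Set.univ →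
      Cardinal.continuum ≤ Cardinal.mk 𝒜)
    {ι : Type} (hι : Cardinal.mk ι < Cardinal.continuum) (G : ι → Set ℕ)
    (hG : ∀ t : Finset ι, APRich (⋂ i ∈ t, G i)) (f : ℕ → ℕ) :
    ∃ S : Set ℕ, S.Infinite ∧ (∀ n, f n ≤ Nat.nth (· ∈ S) n) ∧
      ∀ t : Finset ι, APRich (S ∩ ⋂ i ∈ t, G i) := by
  classical
  set g : ℕ → ℕ := fun n => (Finset.range (n+1)).sup f + n with hg
  have hgmono : Monotone g := by
    intro m n hmn
    have : (Finset.range (m+1)).sup f ≤ (Finset.range (n+1)).sup f :=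
      Finset.sup_mono (by simp [Finset.range_subset]; omega)
    simp only [hg]; omega
  have hfg : ∀ n, f n ≤ g n := by
    intro n
    have : f n ≤ (Finset.range (n+1)).sup f :=
      Finset.le_sup (by simp)
    simp only [hg]; omega
  -- the countable poset of conditions
  set Cond := {s : Finset ℕ // ∀ n, (s.filter (fun m => m < g n)).card ≤ n} with hCond
  have : Countable Cond := Subtype.countable
  have : Nonempty Cond := ⟨⟨∅, by simp⟩⟩
  set R : Cond → Cond → Prop := fun t s => s.1 ⊆ t.1 with hR
  -- dense sets
  set D : Finset ι → ℕ → Set Cond := fun t k =>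
    {s | ∃ a d : ℕ, 0 < d ∧ ∀ i < k, a + i * d ∈ s.1 ∧ a + i * d ∈ ⋂ j ∈ t, G j} with hD
  set 𝒟 : Set (Set Cond) := (fun tk : Finset ι × ℕ => D tk.1 tk.2) '' Set.univ with h𝒟
  have hcard : Cardinal.mk 𝒟 < Cardinal.continuum := by
    refine lt_of_le_of_lt ?_ (mk_finset_prod_nat_lt_continuum hι)
    rw [h𝒟]
    exact le_trans Cardinal.mk_image_le (le_of_eq Cardinal.mk_univ)
  have hdense : ∀ Dd ∈ 𝒟, ∀ s : Cond, ∃ s' ∈ Dd, R s' s := by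
    rintro Dd ⟨⟨t, k⟩, -, rfl⟩ s
    -- find an AP of length k in ⋂ t, far out
    have hB : APRich ((⋂ j ∈ t, G j) \ {x | x < g (s.1.card + k)}) :=
      (hG t).diff_bounded _
    obtain ⟨a, d, hd, hmem⟩ := hB k
    set new : Finset ℕ := (Finset.range k).image (fun i => a + i * d) with hnew
    have hnewcard : new.card ≤ k := le_trans Finset.card_image_le (by simp)
    have hnewbig : ∀ x ∈ new, g (s.1.card + k) ≤ x := by
      intro x hx
      rw [hnew, Finset.mem_image] at hx
      obtain ⟨i, hi, rfl⟩ := hx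
      have := hmem i (by simpa using hi)
      have h2 := this.2
      simp only [mem_setOf_eq, not_lt] at h2
      exact h2
    refine ⟨⟨s.1 ∪ new, ?_⟩, ?_, ?_⟩
    · intro n
      rcases le_or_gt n (s.1.card + k) with hn | hn
      · -- new elements are all ≥ g (s.card + k) ≥ g n
        have hsub : (s.1 ∪ new).filter (fun m => m < g n) ⊆ s.1.filter (fun m => m < g n) := by
          intro x hx
          rw [Finset.mem_filter] at hx ⊢
          rcases Finset.mem_union.mp hx.1 with h' | h'
          · exact ⟨h', hx.2⟩
          · exfalso
            have := hnewbig x h'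
            have := hgmono hn
            omega
        exact le_trans (Finset.card_le_card hsub) (s.2 n)
      · calc ((s.1 ∪ new).filter (fun m => m < g n)).card
            ≤ (s.1 ∪ new).card := Finset.card_filter_le _ _
          _ ≤ s.1.card + new.card := Finset.card_union_le _ _
          _ ≤ s.1.card + k := by omega
          _ ≤ n := by omega
    · refine ⟨a, d, hd, fun i hi => ⟨?_, (hmem i hi).1⟩⟩
      apply Finset.mem_union_right
      rw [hnew, Finset.mem_image]
      exact ⟨i, by simpa using hi, rfl⟩
    · exact Finset.subset_union_left
  obtain ⟨q, hqstep, hqmeet⟩ := ma_countable hMA R (fun a => le_refl a.1) 𝒟 hcard hdense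
  have hqmono : ∀ {m n : ℕ}, m ≤ n → (q m).1 ⊆ (q n).1 := by
    intro m n hmn
    induction n with
    | zero => rw [Nat.le_zero.mp hmn]
    | succ n ih =>
      rcases Nat.le_succ_iff.mp hmn with h | h
      · exact (ih h).trans (hqstep n)
      · rw [h]
  -- the generic set
  set S : Set ℕ := ⋃ n, ((q n).1 : Set ℕ) with hS
  have hfinsub : ∀ F : Finset ℕ, ↑F ⊆ S → ∃ m, F ⊆ (q m).1 := by
    intro F
    induction F using Finset.induction with
    | empty => intro _; exact ⟨0, by simp⟩
    | insert _ _ hx ih =>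
      rename_i x F'
      intro hsub
      obtain ⟨m1, hm1⟩ := ih fun y hy => hsub (by simp [hy])
      have hxS : x ∈ S := hsub (by simp)
      rw [hS, mem_iUnion] at hxS
      obtain ⟨m2, hm2⟩ := hxS
      refine ⟨max m1 m2, ?_⟩
      intro y hy
      rcases Finset.mem_insert.mp hy with rfl | hy'
      · exact hqmono (le_max_right m1 m2) hm2
      · exact hqmono (le_max_left m1 m2) (hm1 hy')
  have hrich : ∀ t : Finset ι, APRich (S ∩ ⋂ i ∈ t, G i) := by
    intro t k
    obtain ⟨n, hn⟩ := hqmeet (D t k) ⟨(t, k), mem_univ _, rfl⟩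
    obtain ⟨a, d, hd, hm⟩ := hn
    refine ⟨a, d, hd, fun i hi => ⟨?_, (hm i hi).2⟩⟩
    rw [hS, mem_iUnion]
    exact ⟨n, (hm i hi).1⟩
  have hSinf : S.Infinite := by
    intro hfin
    obtain ⟨b, hb⟩ := hfin.bddAbove
    obtain ⟨a, d, hd, hm⟩ := hrich ∅ (b + 2)
    have h1 := hm (b + 1) (by omega)
    have h2 : a + (b+1) * d ∈ S := h1.1
    have := hb h2
    nlinarith
  have hcardS : ∀ n (F : Finset ℕ), ↑F ⊆ S → (∀ x ∈ F, x < g n) → F.card ≤ n := by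
    intro n F hFS hFlt
    obtain ⟨m, hm⟩ := hfinsub F hFS
    have hsub : F ⊆ (q m).1.filter (fun x => x < g n) := by
      intro x hx
      rw [Finset.mem_filter]
      exact ⟨hm hx, hFlt x hx⟩
    exact le_trans (Finset.card_le_card hsub) ((q m).2 n)
  refine ⟨S, hSinf, ?_, hrich⟩
  intro n
  by_contra hlt
  push_neg at hlt
  have hgn : Nat.nth (· ∈ S) n < g n := lt_of_lt_of_le hlt (hfg n)
  set F : Finset ℕ := (Finset.range (n+1)).image (fun i => Nat.nth (· ∈ S) i) with hF
  have hFcard : F.card = n + 1 := by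
    have hinj : Function.Injective (fun i => Nat.nth (fun x => x ∈ S) i) :=
      (Nat.nth_strictMono hSinf).injective
    rw [hF, Finset.card_image_of_injective _ hinj, Finset.card_range]
  have hFS : ↑F ⊆ S := by
    intro x hx
    simp only [hF, Finset.coe_image, Finset.coe_range, mem_image, mem_Iio] at hx
    obtain ⟨i, _, rfl⟩ := hx
    exact Nat.nth_mem_of_infinite hSinf i
  have hFlt : ∀ x ∈ F, x < g n := by
    intro x hx
    rw [hF, Finset.mem_image] at hx
    obtain ⟨i, hi, rfl⟩ := hx
    have : Nat.nth (· ∈ S) i ≤ Nat.nth (· ∈ S) n :=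
      (Nat.nth_le_nth hSinf).mpr (by simpa using Nat.lt_succ_iff.mp (Finset.mem_range.mp hi))
    omega
  have := hcardS n F hFS hFlt
  omega

lemma step_decide {ι : Type} (G : ι → Set ℕ)
    (hG : ∀ t : Finset ι, APRich (⋂ i ∈ t, G i)) (A : Set ℕ) :
    (∀ t : Finset ι, APRich (A ∩ ⋂ i ∈ t, G i)) ∨
      (∀ t : Finset ι, APRich (Aᶜ ∩ ⋂ i ∈ t, G i)) := by
  classical
  by_contra hc
  push_neg at hc
  obtain ⟨⟨t, ht⟩, ⟨t', ht'⟩⟩ := hc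
  have hsub : (⋂ i ∈ t ∪ t', G i) ⊆ (A ∩ ⋂ i ∈ t, G i) ∪ (Aᶜ ∩ ⋂ i ∈ t', G i) := by
    intro x hx
    simp only [mem_iInter, Finset.mem_union] at hx
    by_cases hA : x ∈ A
    · exact Or.inl ⟨hA, by simp only [mem_iInter]; exact fun i hi => hx i (Or.inl hi)⟩
    · exact Or.inr ⟨hA, by simp only [mem_iInter]; exact fun i hi => hx i (Or.inr hi)⟩
  rcases ((hG (t ∪ t')).mono hsub).union with h | h
  · exact ht h
  · exact ht' h

lemma step_addSet
    (hMA : ∀ 𝒜 : Set (Set (ℕ → ℕ)), (∀ A ∈ 𝒜, IsMeagre A) → ⋃₀ 𝒜 = Set.univ →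
      Cardinal.continuum ≤ Cardinal.mk 𝒜)
    {ι : Type} (hι : Cardinal.mk ι < Cardinal.continuum) (G : ι → Set ℕ) (E : Set ℕ)
    (hE : ∀ t : Finset ι, APRich (E ∩ ⋂ i ∈ t, G i)) (f : ℕ → ℕ) :
    ∃ S : Set ℕ, S.Infinite ∧ (∀ n, f n ≤ Nat.nth (· ∈ S) n) ∧
      ∀ t : Finset ι, APRich ((E ∩ S) ∩ ⋂ i ∈ t, G i) := by
  classical
  set G' : Option ι → Set ℕ := fun o => Option.elim o E G with hG'def
  have hι' : Cardinal.mk (Option ι) < Cardinal.continuum := by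
    rw [Cardinal.mk_option]
    exact Cardinal.add_lt_of_lt Cardinal.aleph0_le_continuum hι
      (lt_of_lt_of_le Cardinal.one_lt_aleph0 Cardinal.aleph0_le_continuum)
  have hG' : ∀ t' : Finset (Option ι), APRich (⋂ o ∈ t', G' o) := by
    intro t'
    refine (hE t'.eraseNone).mono ?_
    intro x hx
    obtain ⟨hxE, hxG⟩ := hx
    simp only [mem_iInter] at hxG ⊢
    rintro (_ | i) ho
    · exact hxE
    · exact hxG i (Finset.mem_eraseNone.mpr ho)
  obtain ⟨S, hSinf, hSdom, hS⟩ := step_rapid hMA hι' G' hG' f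
  refine ⟨S, hSinf, hSdom, fun t => ?_⟩
  refine (hS (insert none (t.image some))).mono ?_
  intro x hx
  obtain ⟨hxS, hxG⟩ := hx
  simp only [mem_iInter, Finset.mem_insert, Finset.mem_image] at hxG
  refine ⟨⟨hxG none (Or.inl rfl), hxS⟩, ?_⟩
  simp only [mem_iInter]
  intro i hi
  exact hxG (some i) (Or.inr ⟨i, hi, rfl⟩)

/-- Combined step: decide a set and add a rapid set. -/
lemma step_combined
    (hMA : ∀ 𝒜 : Set (Set (ℕ → ℕ)), (∀ A ∈ 𝒜, IsMeagre A) → ⋃₀ 𝒜 = Set.univ →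
      Cardinal.continuum ≤ Cardinal.mk 𝒜)
    {ι : Type} (hι : Cardinal.mk ι < Cardinal.continuum) (G : ι → Set ℕ)
    (hG : ∀ t : Finset ι, APRich (⋂ i ∈ t, G i)) (f : ℕ → ℕ) (A : Set ℕ) :
    ∃ E S : Set ℕ, (E = A ∨ E = Aᶜ) ∧ S.Infinite ∧ (∀ n, f n ≤ Nat.nth (· ∈ S) n) ∧
      ∀ t : Finset ι, APRich ((E ∩ S) ∩ ⋂ i ∈ t, G i) := by
  obtain hE | hE := step_decide G hG A
  · obtain ⟨S, h1, h2, h3⟩ := step_addSet hMA hι G A hE f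
    exact ⟨A, S, Or.inl rfl, h1, h2, h3⟩
  · obtain ⟨S, h1, h2, h3⟩ := step_addSet hMA hι G Aᶜ hE f
    exact ⟨Aᶜ, S, Or.inr rfl, h1, h2, h3⟩

section Construction

/-- The index type: a well-order of length `𝔠`. -/
abbrev XX : Type := (Cardinal.continuum.ord).ToType

lemma mk_XX : Cardinal.mk XX = Cardinal.continuum := Cardinal.mk_ord_toType _

lemma mk_stepIdx_lt (x : XX) :
    Cardinal.mk {p : XX × Bool // p.1 < x} < Cardinal.continuum := by
  have h1 : Cardinal.mk {p : XX × Bool // p.1 < x} ≤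
      Cardinal.mk (Set.Iio x × Bool) := by
    refine Cardinal.mk_le_of_injective (f := fun p => (⟨p.1.1, p.2⟩, p.1.2)) ?_
    rintro ⟨⟨a, b⟩, ha⟩ ⟨⟨a', b'⟩, ha'⟩ h
    simp only [Prod.mk.injEq, Subtype.mk.injEq] at h ⊢
    exact ⟨congrArg Subtype.val h.1, h.2⟩
  refine lt_of_le_of_lt h1 ?_
  rw [Cardinal.mk_prod, Cardinal.lift_id, Cardinal.lift_id]
  exact Cardinal.mul_lt_of_lt Cardinal.aleph0_le_continuum
    (Cardinal.mk_Iio_ord_toType x)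
    (lt_of_lt_of_le (Cardinal.lt_aleph0_of_finite Bool) Cardinal.aleph0_le_continuum)

variable (hMA : ∀ 𝒜 : Set (Set (ℕ → ℕ)), (∀ A ∈ 𝒜, IsMeagre A) → ⋃₀ 𝒜 = Set.univ →
      Cardinal.continuum ≤ Cardinal.mk 𝒜)
  (e : XX ≃ (ℕ → ℕ) × Set ℕ)

/-- The family of previously chosen sets, as seen at stage `x`. -/
def GFam (x : XX) (prev : ∀ y : XX, y < x → Set ℕ × Set ℕ) :
    {p : XX × Bool // p.1 < x} → Set ℕ :=
  fun p => if p.1.2 then (prev p.1.1 p.2).1 else (prev p.1.1 p.2).2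

open Classical in
/-- One step of the transfinite recursion. -/
noncomputable def stepF (x : XX) (prev : ∀ y : XX, y < x → Set ℕ × Set ℕ) :
    Set ℕ × Set ℕ :=
  if h : ∀ t : Finset {p : XX × Bool // p.1 < x}, APRich (⋂ p ∈ t, GFam x prev p) then
    ((step_combined hMA (mk_stepIdx_lt x) (GFam x prev) h (e x).1 (e x).2).choose,
     (step_combined hMA (mk_stepIdx_lt x) (GFam x prev) h (e x).1 (e x).2).choose_spec.choose)
  else (Set.univ, Set.univ)

/-- The transfinite recursion. -/
noncomputable def FF : XX → Set ℕ × Set ℕ :=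
  (IsWellFounded.wf (r := ((· < ·) : XX → XX → Prop))).fix (stepF hMA e)

lemma FF_eq (x : XX) : FF hMA e x = stepF hMA e x (fun y _ => FF hMA e y) :=
  WellFounded.fix_eq _ _ _

/-- All the chosen sets. -/
noncomputable def HH : XX × Bool → Set ℕ :=
  fun p => if p.2 then (FF hMA e p.1).1 else (FF hMA e p.1).2

lemma GFam_eq_HH (x : XX) (p : {p : XX × Bool // p.1 < x}) :
    GFam x (fun y _ => FF hMA e y) p = HH hMA e p.1 := rfl

/-- Derivation of the step condition from the invariant below a stage. -/
lemma cond_of_partial (x : XX)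
    (hball : ∀ y : XX, y < x → ∀ t : Finset (XX × Bool), (∀ p ∈ t, p.1 ≤ y) →
      APRich (⋂ p ∈ t, HH hMA e p)) :
    ∀ tt : Finset {p : XX × Bool // p.1 < x},
      APRich (⋂ p ∈ tt, GFam x (fun y _ => FF hMA e y) p) := by
  classical
  intro tt
  rcases tt.eq_empty_or_nonempty with rfl | hne
  · simpa using apRich_univ
  · set t : Finset (XX × Bool) := tt.image Subtype.val with ht
    have htne : t.Nonempty := hne.image _
    set y0 : XX := (t.image Prod.fst).max' (htne.image _) with hy0
    have hy0x : y0 < x := by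
      have := (t.image Prod.fst).max'_mem (htne.image _)
      rw [← hy0, Finset.mem_image] at this
      obtain ⟨q, hq, hqy⟩ := this
      rw [ht, Finset.mem_image] at hq
      obtain ⟨p, _, rfl⟩ := hq
      rw [← hqy]
      exact p.2
    have hbound : ∀ q ∈ t, q.1 ≤ y0 := by
      intro q hq
      exact Finset.le_max' _ _ (Finset.mem_image_of_mem Prod.fst hq)
    refine (hball y0 hy0x t hbound).mono ?_
    intro z hz
    simp only [mem_iInter] at hz ⊢
    intro p hp
    rw [GFam_eq_HH]
    exact hz p.1 (by rw [ht]; exact Finset.mem_image_of_mem _ hp)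

/-- The main invariant: all finite intersections of chosen sets are AP-rich. -/
lemma inv_FF : ∀ x : XX, ∀ t : Finset (XX × Bool), (∀ p ∈ t, p.1 ≤ x) →
    APRich (⋂ p ∈ t, HH hMA e p) := by
  classical
  intro x
  induction x using (IsWellFounded.wf (r := ((· < ·) : XX → XX → Prop))).induction with
  | _ x ih =>
  intro t htle
  have hcond := cond_of_partial hMA e x ih
  set c := step_combined hMA (mk_stepIdx_lt x) (GFam x (fun y _ => FF hMA e y)) hcond
    (e x).1 (e x).2 with hc
  have hFFx : FF hMA e x = (c.choose, c.choose_spec.choose) := by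
    rw [FF_eq, stepF, dif_pos hcond]
  have hrich : ∀ tt : Finset {p : XX × Bool // p.1 < x},
      APRich ((c.choose ∩ c.choose_spec.choose) ∩
        ⋂ p ∈ tt, GFam x (fun y _ => FF hMA e y) p) :=
    c.choose_spec.choose_spec.2.2.2
  set tt : Finset {p : XX × Bool // p.1 < x} := t.subtype (fun p => p.1 < x) with htt
  refine (hrich tt).mono ?_
  intro z hz
  obtain ⟨⟨hzE, hzS⟩, hzG⟩ := hz
  simp only [mem_iInter] at hzG ⊢
  intro p hp
  rcases lt_or_eq_of_le (htle p hp) with hlt | heq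
  · have := hzG ⟨p, hlt⟩ (by rw [htt]; simp [Finset.mem_subtype, hp])
    rwa [GFam_eq_HH] at this
  · rw [HH, heq, hFFx]
    cases hb : p.2
    · simpa using hzS
    · simpa using hzE
/-- All finite intersections are AP-rich, unconditionally. -/
lemma rich_all : ∀ t : Finset (XX × Bool), APRich (⋂ p ∈ t, HH hMA e p) := by
  classical
  intro t
  rcases t.eq_empty_or_nonempty with rfl | hne
  · simpa using apRich_univ
  · set y0 : XX := (t.image Prod.fst).max' (hne.image _) with hy0
    refine inv_FF hMA e y0 t ?_
    intro p hp
    exact Finset.le_max' _ _ (Finset.mem_image_of_mem Prod.fst hp)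

/-- The properties of the pair chosen at stage `x`. -/
lemma FF_spec (x : XX) :
    ((FF hMA e x).1 = (e x).2 ∨ (FF hMA e x).1 = ((e x).2)ᶜ) ∧
      (FF hMA e x).2.Infinite ∧ (∀ n, (e x).1 n ≤ Nat.nth (· ∈ (FF hMA e x).2) n) := by
  classical
  have hcond := cond_of_partial hMA e x (fun y _ => inv_FF hMA e y)
  set c := step_combined hMA (mk_stepIdx_lt x) (GFam x (fun y _ => FF hMA e y)) hcond
    (e x).1 (e x).2 with hc
  have hFFx : FF hMA e x = (c.choose, c.choose_spec.choose) := by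
    rw [FF_eq, stepF, dif_pos hcond]
  obtain ⟨h1, h2, h3, _⟩ := c.choose_spec.choose_spec
  rw [hFFx]
  exact ⟨h1, h2, h3⟩

end Construction


end Aux

/-- Assuming Martin's axiom for countable posets (equivalently `cov(meager) = 𝔠`,
stated here as: the Baire space is not covered by fewer than continuum many meager
sets), there is a rapid ultrafilter disjoint from the van der Waerden ideal, i.e.
each of whose members contains arbitrarily long arithmetic progressions. -/
theorem rapid_ultrafilter_avoiding_vdW_of_covMeager_eq_continuum
    (hMA : ∀ 𝒜 : Set (Set (ℕ → ℕ)), (∀ A ∈ 𝒜, IsMeagre A) → ⋃₀ 𝒜 = Set.univ →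
      Cardinal.continuum ≤ Cardinal.mk 𝒜) :
    ∃ U : Ultrafilter ℕ, IsRapid U ∧ ∀ A ∈ U, A ∉ VdWIdeal := by
  classical
  -- fix an enumeration of all (function, set) pairs
  have hmk : Cardinal.mk XX = Cardinal.mk ((ℕ → ℕ) × Set ℕ) := by
    rw [mk_XX, Cardinal.mk_prod, Cardinal.lift_id, Cardinal.lift_id, Cardinal.mk_set,
      Cardinal.mk_nat, Cardinal.two_power_aleph0]
    have harrow : Cardinal.mk (ℕ → ℕ) = Cardinal.continuum := by
      rw [Cardinal.mk_arrow, Cardinal.lift_id, Cardinal.mk_nat]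
      exact Cardinal.aleph0_power_aleph0
    rw [harrow, Cardinal.continuum_mul_self]
  obtain ⟨e⟩ := Cardinal.eq.mp hmk
  -- the filter generated by the chosen sets
  set 𝒰 : Set (Set ℕ) := {Z | ∃ t : Finset (XX × Bool), (⋂ p ∈ t, HH hMA e p) ⊆ Z} with h𝒰
  have hUrich : ∀ Z ∈ 𝒰, APRich Z := by
    rintro Z ⟨t, ht⟩
    exact (rich_all hMA e t).mono ht
  have hHmem : ∀ p : XX × Bool, HH hMA e p ∈ 𝒰 := by
    intro p
    exact ⟨{p}, by simp⟩
  set F : Filter ℕ :=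
    { sets := 𝒰
      univ_sets := ⟨∅, by simp⟩
      sets_of_superset := by
        rintro Z W ⟨t, ht⟩ hZW
        exact ⟨t, ht.trans hZW⟩
      inter_sets := by
        rintro Z W ⟨t, ht⟩ ⟨t', ht'⟩
        refine ⟨t ∪ t', ?_⟩
        intro z hz
        simp only [mem_iInter, Finset.mem_union] at hz
        exact ⟨ht (by simp only [mem_iInter]; exact fun p hp => hz p (Or.inl hp)),
          ht' (by simp only [mem_iInter]; exact fun p hp => hz p (Or.inr hp))⟩ } with hF
  have hFmem : ∀ Z : Set ℕ, Z ∈ F ↔ Z ∈ 𝒰 := fun Z => Iff.rfl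
  have hne : ∀ Z ∈ F, Z.Nonempty := by
    intro Z hZ
    obtain ⟨a, d, _, hm⟩ := hUrich Z ((hFmem Z).mp hZ) 1
    exact ⟨a + 0 * d, hm 0 one_pos⟩
  have hultra : ∀ A : Set ℕ, A ∈ F ∨ Aᶜ ∈ F := by
    intro A
    set x : XX := e.symm ((fun _ => 0), A) with hx
    have hex : (e x).2 = A := by rw [hx, Equiv.apply_symm_apply]
    have hdec := (FF_spec hMA e x).1
    have hmem : (FF hMA e x).1 ∈ F := (hFmem _).mpr (hHmem (x, true))
    rw [hex] at hdec
    rcases hdec with h | h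
    · exact Or.inl (h ▸ hmem)
    · exact Or.inr (h ▸ hmem)
  have hcompl : ∀ s : Set ℕ, sᶜ ∉ F ↔ s ∈ F := by
    intro s
    constructor
    · intro h
      rcases hultra s with h' | h'
      · exact h'
      · exact absurd h' h
    · intro hs hsc
      have := F.inter_sets hs hsc
      simp only [Set.inter_compl_self] at this
      obtain ⟨z, hz⟩ := hne _ this
      exact hz
  refine ⟨Ultrafilter.ofComplNotMemIff F hcompl, ?_, ?_⟩
  · intro f
    set x : XX := e.symm (f, ∅) with hx
    have hex : e x = (f, ∅) := by rw [hx, Equiv.apply_symm_apply]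
    obtain ⟨-, hinf, hdom⟩ := FF_spec hMA e x
    refine ⟨(FF hMA e x).2, (hFmem _).mpr (hHmem (x, false)), hinf, ?_⟩
    intro n
    have := hdom n
    rwa [hex] at this
  · intro A hA
    have : APRich A := hUrich A ((hFmem A).mp hA)
    simp only [VdWIdeal, mem_setOf_eq, not_not]
    exact this
end

section
/- If X is the countably infinite metric fan M (the quotient of ω copies of a convergent sequence identified at the limit point), then the space C_k(M, 2) of continuous functions from M to the discrete two-point space with the compact-open topology is sequential. -/
/-- The underlying set of the metric fan: countably many convergent sequences
(the columns `{(n, k) : k ∈ ℕ}`) with their limit points identified to the single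
point `∞ = none`. -/
def MetricFan : Type := Option (ℕ × ℕ)

/-- The topology of the metric fan: points of `ω × ω` are isolated, and basic
neighborhoods of `∞` are the sets `{(n, k) : k ≥ m} ∪ {∞}` for `m ∈ ℕ`
(these are the balls of the standard metric `d((n,k), ∞) = 1/(k+1)`). -/
instance : TopologicalSpace MetricFan where
  IsOpen U := (none ∈ U) → ∃ m : ℕ, ∀ n k : ℕ, m ≤ k → some (n, k) ∈ U
  isOpen_univ := fun _ => ⟨0, fun _ _ _ => Set.mem_univ _⟩
  isOpen_inter := by
    rintro U V hU hV ⟨hU', hV'⟩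
    obtain ⟨m₁, h₁⟩ := hU hU'
    obtain ⟨m₂, h₂⟩ := hV hV'
    exact ⟨max m₁ m₂, fun n k hk =>
      ⟨h₁ n k (le_trans (le_max_left _ _) hk), h₂ n k (le_trans (le_max_right _ _) hk)⟩⟩
  isOpen_sUnion := by
    rintro S hS ⟨U, hU, hnU⟩
    obtain ⟨m, hm⟩ := hS U hU hnU
    exact ⟨m, fun n k hk => ⟨U, hU, hm n k hk⟩⟩

namespace FanProof

open Set Filter Topology

abbrev Pi2 : Type := (ℕ × ℕ) → Bool

lemma fan_isOpen_iff {U : Set MetricFan} :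
    IsOpen U ↔ (none ∈ U → ∃ m : ℕ, ∀ n k : ℕ, m ≤ k → some (n, k) ∈ U) := Iff.rfl

lemma fan_isOpen_of_not_none {U : Set MetricFan} (h : none ∉ U) : IsOpen U :=
  fan_isOpen_iff.mpr fun hn => absurd hn h

lemma fan_continuous_iff {f : MetricFan → Bool} :
    Continuous f ↔ ∃ m : ℕ, ∀ n k : ℕ, m ≤ k → f (some (n, k)) = f none := by
  constructor
  · intro hf
    have h1 : IsOpen (f ⁻¹' {f none}) := (isOpen_discrete _).preimage hf
    obtain ⟨m, hm⟩ := fan_isOpen_iff.mp h1 rfl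
    exact ⟨m, fun n k hk => hm n k hk⟩
  · rintro ⟨m, hm⟩
    rw [continuous_def]
    intro V _
    refine fan_isOpen_iff.mpr fun hn => ⟨m, fun n k hk => ?_⟩
    show f (some (n, k)) ∈ V
    rw [hm n k hk]; exact hn

lemma compact_slice_finite {K : Set MetricFan} (hK : IsCompact K) (m : ℕ) :
    {p : ℕ × ℕ | some p ∈ K ∧ p.2 < m}.Finite := by
  classical
  set U : Option (ℕ × ℕ) → Set MetricFan := fun i =>
    Option.elim i {x | x = none ∨ ∃ p : ℕ × ℕ, x = some p ∧ m ≤ p.2}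
      (fun p => {some p}) with hUdef
  have hUo : ∀ i, IsOpen (U i) := by
    intro i
    match i with
    | none => exact fan_isOpen_iff.mpr fun _ => ⟨m, fun n k hk => Or.inr ⟨(n, k), rfl, hk⟩⟩
    | some p =>
      refine fan_isOpen_of_not_none ?_
      intro h
      exact nomatch (h : (none : Option (ℕ × ℕ)) = some p)
  have hcov : K ⊆ ⋃ i, U i := by
    intro x hx
    match x with
    | none => exact Set.mem_iUnion.mpr ⟨none, Or.inl rfl⟩
    | some p =>
      by_cases hp : m ≤ p.2
      · exact Set.mem_iUnion.mpr ⟨none, Or.inr ⟨p, rfl, hp⟩⟩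
      · exact Set.mem_iUnion.mpr ⟨some p, rfl⟩
  obtain ⟨t, ht⟩ := hK.elim_finite_subcover U hUo hcov
  have hsub : {p : ℕ × ℕ | some p ∈ K ∧ p.2 < m} ⊆ some ⁻¹' (↑t : Set (Option (ℕ × ℕ))) := by
    intro p hp
    have h2 := ht hp.1
    replace h2 := Set.mem_iUnion₂.mp h2
    obtain ⟨i, hit, hmem⟩ := h2
    match i with
    | none =>
      rcases hmem with h | ⟨q, hq, hmq⟩
      · exact nomatch h
      · have hpq : p = q := Option.some.inj hq
        subst hpq
        exact absurd hmq (not_le.mpr hp.2)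
    | some q =>
      have hpq : (some p : MetricFan) = some q := Set.mem_singleton_iff.mp hmem
      have : p = q := Option.some.inj hpq
      subst this
      exact hit
  exact (t.finite_toSet.preimage (Option.some_injective _).injOn).subset hsub

lemma isCompact_fan {S : Set (ℕ × ℕ)} (hS : ∀ m : ℕ, {p ∈ S | p.2 < m}.Finite) :
    IsCompact (insert none (some '' S) : Set MetricFan) := by
  classical
  refine isCompact_of_finite_subcover fun {ι} U hUo hcov => ?_
  obtain ⟨i₀, hi₀⟩ := Set.mem_iUnion.mp (hcov (Set.mem_insert _ _))
  obtain ⟨m, hm⟩ := fan_isOpen_iff.mp (hUo i₀) hi₀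
  have hsel : ∀ p : ℕ × ℕ, ∃ i, (p ∈ S ∧ p.2 < m) → some p ∈ U i := by
    intro p
    by_cases hp : p ∈ S ∧ p.2 < m
    · obtain ⟨i, hi⟩ := Set.mem_iUnion.mp
        (hcov (Set.mem_insert_of_mem _ (Set.mem_image_of_mem _ hp.1)))
      exact ⟨i, fun _ => hi⟩
    · exact ⟨i₀, fun h => absurd h hp⟩
  choose c hc using hsel
  refine ⟨insert i₀ ((hS m).toFinset.image c), ?_⟩
  intro x hx
  rcases hx with rfl | ⟨p, hpS, rfl⟩
  · exact Set.mem_iUnion₂.mpr ⟨i₀, Finset.mem_insert_self _ _, hi₀⟩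
  · by_cases hp2 : m ≤ p.2
    · exact Set.mem_iUnion₂.mpr ⟨i₀, Finset.mem_insert_self _ _, hm p.1 p.2 hp2⟩
    · refine Set.mem_iUnion₂.mpr ⟨c p, Finset.mem_insert_of_mem
        (Finset.mem_image_of_mem c ((hS m).mem_toFinset.mpr ⟨hpS, by omega⟩)),
        hc p ⟨hpS, by omega⟩⟩

def Zb (m : ℕ) : Set Pi2 := {u | ∀ p : ℕ × ℕ, m ≤ p.2 → u p = false}

def NP (P : Finset (ℕ × ℕ)) : Set Pi2 := {u | ∀ p ∈ P, u p = false}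

def Cyl (s : Pi2) (P : Finset (ℕ × ℕ)) : Set Pi2 := {u | ∀ p ∈ P, u p = s p}

def xadd (u v : Pi2) : Pi2 := fun p => xor (u p) (v p)

lemma isClosed_eval (p : ℕ × ℕ) (b : Bool) : IsClosed {u : Pi2 | u p = b} := by
  have h : {u : Pi2 | u p = b} = (fun u : Pi2 => u p) ⁻¹' {b} := rfl
  rw [h]
  exact (isClosed_discrete _).preimage (continuous_apply p)

lemma isOpen_eval (p : ℕ × ℕ) (b : Bool) : IsOpen {u : Pi2 | u p = b} := by
  have h : {u : Pi2 | u p = b} = (fun u : Pi2 => u p) ⁻¹' {b} := rfl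
  rw [h]
  exact (isOpen_discrete _).preimage (continuous_apply p)

lemma isClosed_Zb (m : ℕ) : IsClosed (Zb m) := by
  have h : Zb m = ⋂ p ∈ {q : ℕ × ℕ | m ≤ q.2}, {u : Pi2 | u p = false} := by
    ext u; simp [Zb]
  rw [h]
  exact isClosed_biInter fun p _ => isClosed_eval p false

lemma isClosed_NP (P : Finset (ℕ × ℕ)) : IsClosed (NP P) := by
  have h : NP P = ⋂ p ∈ (P : Set (ℕ × ℕ)), {u : Pi2 | u p = false} := by
    ext u; simp [NP]
  rw [h]
  exact isClosed_biInter fun p _ => isClosed_eval p false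

lemma isOpen_Cyl (s : Pi2) (P : Finset (ℕ × ℕ)) : IsOpen (Cyl s P) := by
  have h : Cyl s P = ⋂ p ∈ P, {u : Pi2 | u p = s p} := by
    ext u; simp [Cyl]
  rw [h]
  exact isOpen_biInter_finset fun p _ => isOpen_eval p _

lemma continuous_xadd : Continuous fun q : Pi2 × Pi2 => xadd q.1 q.2 := by
  refine continuous_pi fun p => ?_
  have hxor : Continuous fun b : Bool × Bool => xor b.1 b.2 := by
    exact continuous_of_discreteTopology
  have h1 : Continuous fun q : Pi2 × Pi2 => (q.1 p, q.2 p) :=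
    ((continuous_apply p).comp continuous_fst).prodMk
      ((continuous_apply p).comp continuous_snd)
  exact hxor.comp h1

/-- The image in `Pi2` of the elements of `B` vanishing at `∞`. -/
def Timg (B : Set C(MetricFan, Bool)) : Set Pi2 :=
  {u | ∃ h ∈ B, h none = false ∧ ∀ p : ℕ × ℕ, h (some p) = u p}

/-- Extension of a function on `ℕ × ℕ` of bounded height to a continuous map on the fan. -/
def ext0 (v : Pi2) (hv : ∃ m : ℕ, ∀ p : ℕ × ℕ, m ≤ p.2 → v p = false) :
    C(MetricFan, Bool) :=
  ⟨fun x => Option.elim x false v, by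
    rw [fan_continuous_iff]
    obtain ⟨m, hm⟩ := hv
    exact ⟨m, fun n k hk => hm (n, k) hk⟩⟩

lemma tendsto_of_strip {m : ℕ} {h : ℕ → C(MetricFan, Bool)} {g : C(MetricFan, Bool)}
    (hn : ∀ i, h i none = false) (hgn : g none = false)
    (hZ : ∀ i, ∀ p : ℕ × ℕ, m ≤ p.2 → h i (some p) = false)
    (hgZ : ∀ p : ℕ × ℕ, m ≤ p.2 → g (some p) = false)
    (hpt : ∀ p : ℕ × ℕ, ∀ᶠ i in atTop, h i (some p) = g (some p)) :
    Tendsto h atTop (𝓝 g) := by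
  rw [ContinuousMap.tendsto_nhds_compactOpen]
  intro K hK U hU hmt
  have hF : {p : ℕ × ℕ | some p ∈ K ∧ p.2 < m}.Finite := compact_slice_finite hK m
  have hev : ∀ᶠ i in atTop, ∀ p ∈ hF.toFinset, h i (some p) = g (some p) :=
    (Finset.eventually_all _).mpr fun p _ => hpt p
  filter_upwards [hev] with i hi
  intro x hx
  match x with
  | none =>
    show h i none ∈ U
    rw [hn i, ← hgn]
    exact hmt hx
  | some p =>
    show h i (some p) ∈ U
    by_cases hp : m ≤ p.2
    · rw [hZ i p hp, ← hgZ p hp]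
      exact hmt hx
    · rw [hi p (hF.mem_toFinset.mpr ⟨hx, by omega⟩)]
      exact hmt hx

lemma isClosed_Timg_inter (B : Set C(MetricFan, Bool)) (hB : IsSeqClosed B) (m : ℕ) :
    IsClosed (Timg B ∩ Zb m) := by
  have hseq : IsSeqClosed (Timg B ∩ Zb m) := by
    intro u v hu huv
    have hvZ : v ∈ Zb m := (isClosed_Zb m).isSeqClosed (fun i => (hu i).2) huv
    choose hh hhB hhn hhv using fun i => (hu i).1
    have hptv : ∀ p : ℕ × ℕ, ∀ᶠ i in atTop, u i p = v p := by
      intro p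
      have ht := tendsto_pi_nhds.mp huv p
      exact ht ((isOpen_discrete {v p}).mem_nhds rfl)
    set g : C(MetricFan, Bool) := ext0 v ⟨m, fun p hp => hvZ p hp⟩ with hgdef
    have hgn : g none = false := rfl
    have hgv : ∀ p : ℕ × ℕ, g (some p) = v p := fun p => rfl
    have htd : Tendsto hh atTop (𝓝 g) :=
      tendsto_of_strip (m := m) hhn hgn
        (fun i p hp => by rw [hhv i p]; exact (hu i).2 p hp)
        (fun p hp => by rw [hgv p]; exact hvZ p hp)
        (fun p => by
          filter_upwards [hptv p] with i hi
          rw [hhv i p, hgv p, hi])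
    have hgB : g ∈ B := hB (fun i => hhB i) htd
    exact ⟨⟨g, hgB, hgn, hgv⟩, hvZ⟩
  exact hseq.isClosed

/-- The invariant carried through the inductive construction. -/
def Inv (B : Set C(MetricFan, Bool)) (m : ℕ) (RS : Finset (ℕ × ℕ) × Set Pi2) : Prop :=
  (∀ p ∈ RS.1, p.2 < m) ∧ IsCompact RS.2 ∧ RS.2 ⊆ Zb m ∧ (∀ u ∈ RS.2, u ∉ Timg B) ∧
    (∀ u ∈ Zb m, (∀ p ∈ RS.1, u p = false) → u ∈ RS.2)

lemma cyl_sep {T' : Set Pi2} (hT : IsClosed T') {s : Pi2} (hs : s ∉ T') :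
    ∃ P : Finset (ℕ × ℕ), ∀ u ∈ Cyl s P, u ∉ T' := by
  obtain ⟨I, w, hw, hsub⟩ := isOpen_pi_iff.mp hT.isOpen_compl s hs
  refine ⟨I, fun u hu => hsub fun p hp => ?_⟩
  rw [hu p (Finset.mem_coe.mp hp)]
  exact (hw p (Finset.mem_coe.mp hp)).2

lemma step_ex {S T' : Set Pi2} (hS : IsCompact S) (hT : IsClosed T')
    (hdis : ∀ u ∈ S, u ∉ T') :
    ∃ P : Finset (ℕ × ℕ), ∀ s ∈ S, ∀ v ∈ NP P, xadd s v ∉ T' := by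
  classical
  have hsel : ∀ s : Pi2, ∃ P : Finset (ℕ × ℕ), s ∈ S → ∀ u ∈ Cyl s P, u ∉ T' := by
    intro s
    by_cases hs : s ∈ S
    · obtain ⟨P, hP⟩ := cyl_sep hT (hdis s hs)
      exact ⟨P, fun _ => hP⟩
    · exact ⟨∅, fun h => absurd h hs⟩
  choose Pf hPf using hsel
  obtain ⟨t, htS, htcov⟩ := hS.elim_nhds_subcover (fun s => Cyl s (Pf s))
    (fun s _ => (isOpen_Cyl s (Pf s)).mem_nhds (fun p _ => rfl))
  refine ⟨t.sup Pf, fun s hs v hv => ?_⟩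
  obtain ⟨s₀, hs₀t, hss₀⟩ := Set.mem_iUnion₂.mp (htcov hs)
  refine hPf s₀ (htS s₀ hs₀t) (xadd s v) (fun p hp => ?_)
  have hvp : v p = false := hv p (Finset.mem_sup.mpr ⟨s₀, hs₀t, hp⟩)
  have hsp : s p = s₀ p := hss₀ p hp
  simp [xadd, hvp, hsp]

/-- The zero function. -/
def zeroF : C(MetricFan, Bool) := ⟨fun _ => false, continuous_const⟩

lemma inv_zero (B : Set C(MetricFan, Bool)) (hz : zeroF ∉ B) :
    Inv B 0 (∅, {fun _ => false}) := by
  refine ⟨fun p hp => absurd hp (Finset.notMem_empty p), isCompact_singleton, ?_, ?_, ?_⟩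
  · intro u hu
    rw [Set.mem_singleton_iff] at hu
    subst hu
    intro p _
    rfl
  · intro u hu hmem
    rw [Set.mem_singleton_iff] at hu
    subst hu
    obtain ⟨h, hhB, hhn, hhv⟩ := hmem
    apply hz
    have hh : h = zeroF := by
      ext x
      match x with
      | none => exact hhn
      | some p => exact hhv p
    rwa [hh] at hhB
  · intro u huZ _
    rw [Set.mem_singleton_iff]
    funext p
    exact huZ p (Nat.zero_le _)

lemma step_pack (B : Set C(MetricFan, Bool)) (hB : IsSeqClosed B) (m : ℕ)
    (RS : Finset (ℕ × ℕ) × Set Pi2) (h : Inv B m RS) :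
    ∃ RS' : Finset (ℕ × ℕ) × Set Pi2, Inv B (m + 1) RS' ∧ RS.1 ⊆ RS'.1 ∧
      ∀ p ∈ RS'.1, p.2 ≠ m → p ∈ RS.1 := by
  classical
  obtain ⟨hR, hSc, hSZ, hST, habs⟩ := h
  have hT' : IsClosed (Timg B ∩ Zb (m + 1)) := isClosed_Timg_inter B hB (m + 1)
  have hdis : ∀ u ∈ RS.2, u ∉ Timg B ∩ Zb (m + 1) := fun u hu hmem => hST u hu hmem.1
  obtain ⟨P, hP⟩ := step_ex hSc hT' hdis
  have hS'Z : Set.image2 xadd RS.2 (NP P ∩ Zb (m + 1)) ⊆ Zb (m + 1) := by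
    rintro _ ⟨s, hs, v, hv, rfl⟩ p hp
    have h1 : s p = false := hSZ hs p (by omega)
    have h2 : v p = false := hv.2 p hp
    simp [xadd, h1, h2]
  refine ⟨(RS.1 ∪ P.filter (fun p => p.2 = m), Set.image2 xadd RS.2 (NP P ∩ Zb (m + 1))),
    ⟨?_, ?_, hS'Z, ?_, ?_⟩, Finset.subset_union_left, ?_⟩
  · intro p hp
    rcases Finset.mem_union.mp hp with h1 | h1
    · exact Nat.lt_succ_of_lt (hR p h1)
    · have := (Finset.mem_filter.mp h1).2
      omega
  · rw [← Set.image_prod]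
    exact (hSc.prod (((isClosed_NP P).inter (isClosed_Zb _)).isCompact)).image continuous_xadd
  · rintro _ ⟨s, hs, v, hv, rfl⟩ hmem
    exact hP s hs v hv.1 ⟨hmem, hS'Z (Set.mem_image2_of_mem hs hv)⟩
  · intro u huZ hu0
    set ulow : Pi2 := fun p => if p.2 = m then false else u p with hulow
    set utop : Pi2 := fun p => if p.2 = m then u p else false with hutop
    have hdecomp : u = xadd ulow utop := by
      funext p
      by_cases hpm : p.2 = m <;> simp [xadd, hulow, hutop, hpm]
    have hlowZ : ulow ∈ Zb m := by
      intro p hp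
      by_cases hpm : p.2 = m
      · simp [hulow, hpm]
      · simp only [hulow, if_neg hpm]
        exact huZ p (by omega)
    have hlow0 : ∀ p ∈ RS.1, ulow p = false := by
      intro p hp
      have hpm : p.2 ≠ m := by have := hR p hp; omega
      simp only [hulow, if_neg hpm]
      exact hu0 p (Finset.mem_union_left _ hp)
    have hlowS : ulow ∈ RS.2 := habs ulow hlowZ hlow0
    have htopNP : utop ∈ NP P := by
      intro p hp
      by_cases hpm : p.2 = m
      · simp only [hutop, if_pos hpm]
        exact hu0 p (Finset.mem_union_right _ (Finset.mem_filter.mpr ⟨hp, hpm⟩))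
      · simp [hutop, hpm]
    have htopZ : utop ∈ Zb (m + 1) := by
      intro p hp
      have hpm : p.2 ≠ m := by omega
      simp [hutop, hpm]
    rw [hdecomp]
    exact Set.mem_image2_of_mem hlowS ⟨htopNP, htopZ⟩
  · intro p hp hpm
    rcases Finset.mem_union.mp hp with h1 | h1
    · exact h1
    · exact absurd (Finset.mem_filter.mp h1).2 hpm

noncomputable def fanSt (B : Set C(MetricFan, Bool)) (hB : IsSeqClosed B) (hz : zeroF ∉ B) :
    (m : ℕ) → {RS : Finset (ℕ × ℕ) × Set Pi2 // Inv B m RS}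
  | 0 => ⟨(∅, {fun _ => false}), inv_zero B hz⟩
  | m + 1 => ⟨(step_pack B hB m (fanSt B hB hz m).1 (fanSt B hB hz m).2).choose,
      (step_pack B hB m (fanSt B hB hz m).1 (fanSt B hB hz m).2).choose_spec.1⟩

lemma fanSt_mem_of_ne (B : Set C(MetricFan, Bool)) (hB : IsSeqClosed B) (hz : zeroF ∉ B)
    (m : ℕ) : ∀ p ∈ (fanSt B hB hz (m + 1)).1.1, p.2 ≠ m → p ∈ (fanSt B hB hz m).1.1 :=
  (step_pack B hB m (fanSt B hB hz m).1 (fanSt B hB hz m).2).choose_spec.2.2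

lemma fanSt_row (B : Set C(MetricFan, Bool)) (hB : IsSeqClosed B) (hz : zeroF ∉ B) :
    ∀ m : ℕ, ∀ p ∈ (fanSt B hB hz m).1.1, p ∈ (fanSt B hB hz (p.2 + 1)).1.1 := by
  intro m
  induction m with
  | zero => exact fun p hp => absurd hp (Finset.notMem_empty p)
  | succ m ih =>
    intro p hp
    by_cases hpm : p.2 = m
    · subst hpm
      exact hp
    · exact ih p (fanSt_mem_of_ne B hB hz m p hp hpm)

lemma key (B : Set C(MetricFan, Bool)) (hB : IsSeqClosed B) (hz : zeroF ∉ B) :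
    ∃ W : Set C(MetricFan, Bool), IsOpen W ∧ zeroF ∈ W ∧ ∀ h ∈ B, h ∉ W := by
  classical
  set R : ℕ → Finset (ℕ × ℕ) := fun m => (fanSt B hB hz m).1.1 with hRdef
  set Sset : Set (ℕ × ℕ) := {p | p ∈ R (p.2 + 1)} with hSdef
  have hKc : IsCompact (insert none (some '' Sset) : Set MetricFan) := by
    apply isCompact_fan
    intro m
    apply Set.Finite.subset (Set.Finite.biUnion (Finset.range m).finite_toSet
      (fun c _ => (R (c + 1)).finite_toSet))
    rintro p ⟨hpS, hpm⟩
    exact Set.mem_biUnion (Finset.mem_coe.mpr (Finset.mem_range.mpr hpm)) hpS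
  refine ⟨{h : C(MetricFan, Bool) | Set.MapsTo h (insert none (some '' Sset)) {false}},
    ContinuousMap.isOpen_setOf_mapsTo hKc (isOpen_discrete _), fun x _ => rfl, ?_⟩
  intro h hhB hhW
  have hn : h none = false := hhW (Set.mem_insert _ _)
  obtain ⟨m, hm⟩ := fan_continuous_iff.mp h.continuous
  set u : Pi2 := fun p => h (some p) with hudef
  have huZ : u ∈ Zb m := by
    intro p hp
    show h (some p) = false
    have := hm p.1 p.2 hp
    rw [show ((p.1, p.2) : ℕ × ℕ) = p from rfl] at this
    rw [this, hn]
  have hu0 : ∀ p ∈ R m, u p = false := by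
    intro p hp
    have h1 : p ∈ R (p.2 + 1) := fanSt_row B hB hz m p hp
    exact hhW (Set.mem_insert_of_mem _ (Set.mem_image_of_mem _ h1))
  have huS : u ∈ (fanSt B hB hz m).1.2 := (fanSt B hB hz m).2.2.2.2.2 u huZ hu0
  exact (fanSt B hB hz m).2.2.2.2.1 u huS ⟨h, hhB, hn, fun p => rfl⟩

/-- Pointwise `xor` with a fixed continuous map. -/
def xorC (f h : C(MetricFan, Bool)) : C(MetricFan, Bool) :=
  ⟨fun x => xor (h x) (f x),
    (continuous_of_discreteTopology (f := fun b : Bool × Bool => xor b.1 b.2)).comp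
      (h.continuous.prodMk f.continuous)⟩

lemma continuous_xorC (f : C(MetricFan, Bool)) : Continuous (xorC f) := by
  rw [ContinuousMap.continuous_compactOpen]
  intro K hK U hU
  have hsplit : {h : C(MetricFan, Bool) | Set.MapsTo (xorC f h) K U} =
      {h : C(MetricFan, Bool) | Set.MapsTo h (K ∩ (⇑f) ⁻¹' {false}) U} ∩
      {h : C(MetricFan, Bool) |
        Set.MapsTo h (K ∩ (⇑f) ⁻¹' {true}) ((fun b => xor b true) ⁻¹' U)} := by
    ext h
    simp only [Set.mem_setOf_eq, Set.mem_inter_iff]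
    constructor
    · intro hmt
      constructor
      · intro x hx
        have h1 := hmt hx.1
        have hfx : f x = false := hx.2
        show h x ∈ U
        have h2 : xor (h x) (f x) = h x := by rw [hfx]; exact Bool.xor_false _
        rwa [show (xorC f h) x = xor (h x) (f x) from rfl, h2] at h1
      · intro x hx
        have h1 := hmt hx.1
        have hfx : f x = true := hx.2
        show xor (h x) true ∈ U
        rwa [show (xorC f h) x = xor (h x) (f x) from rfl, hfx] at h1
    · rintro ⟨h1, h2⟩ x hx
      show xor (h x) (f x) ∈ U
      cases hfx : f x
      · have := h1 ⟨hx, hfx⟩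
        rwa [Bool.xor_false]
      · exact h2 ⟨hx, hfx⟩
  rw [hsplit]
  have c1 : IsClosed ((⇑f) ⁻¹' {false}) := (isClosed_discrete _).preimage f.continuous
  have c2 : IsClosed ((⇑f) ⁻¹' {true}) := (isClosed_discrete _).preimage f.continuous
  exact (ContinuousMap.isOpen_setOf_mapsTo (hK.inter_right c1) hU).inter
    (ContinuousMap.isOpen_setOf_mapsTo (hK.inter_right c2) (isOpen_discrete _))

end FanProof

/-- The space `C_k(M, 2)` of continuous functions from the metric fan to the discrete
two-point space, with the compact-open topology, is sequential. -/
theorem metricFan_Ck_two_sequential : SequentialSpace C(MetricFan, Bool) := by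
  open FanProof in
  constructor
  intro A hA
  rw [← isOpen_compl_iff, isOpen_iff_mem_nhds]
  intro f hf
  have hcont := FanProof.continuous_xorC f
  have hBseq : IsSeqClosed ((FanProof.xorC f) ⁻¹' A) := hA.preimage hcont.seqContinuous
  have hz : FanProof.zeroF ∉ (FanProof.xorC f) ⁻¹' A := by
    intro hmem
    apply hf
    have heq : FanProof.xorC f FanProof.zeroF = f := by
      ext x
      show xor false (f x) = f x
      exact Bool.false_xor _
    rwa [Set.mem_preimage, heq] at hmem
  obtain ⟨W, hWo, hW0, hWB⟩ := FanProof.key _ hBseq hz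
  refine Filter.mem_of_superset ((hWo.preimage hcont).mem_nhds ?_) ?_
  · show FanProof.xorC f f ∈ W
    have heq : FanProof.xorC f f = FanProof.zeroF := by
      ext x
      show xor (f x) (f x) = false
      exact Bool.xor_self _
    rwa [heq]
  · intro h hh hhA
    have hinv : FanProof.xorC f (FanProof.xorC f h) = h := by
      ext x
      show xor (xor (h x) (f x)) (f x) = h x
      cases h x <;> cases f x <;> rfl
    exact hWB (FanProof.xorC f h) (by rw [Set.mem_preimage, hinv]; exact hhA) hh
end
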